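/- Let H : ℝ^k → ℝ be continuously differentiable, let N be a constant k×k real matrix with xᵀNx ≤ 0 for all x ∈ ℝ^k (N not necessarily symmetric), let Δt > 0, and suppose u₀, u₁ ∈ ℝ^k satisfy the average vector field relation (u₁ - u₀)/Δt = ∫₀¹ N ∇H((1-ξ)u₀ + ξu₁) dξ. Then the energy is dissipated monotonically: H(u₁) ≤ H(u₀). -/

import Mathlib

open Matrix

open scoped RealInnerProductSpace

/-- Monotonic energy dissipation by the average vector field (AVF) method applied to
`u' = N ∇H(u)` with constant negative-semidefinite (not necessarily symmetric) `N`. -/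
theorem avf_energy_dissipation {k : ℕ}
    (H : EuclideanSpace ℝ (Fin k) → ℝ) (hH : ContDiff ℝ 1 H)
    (N : Matrix (Fin k) (Fin k) ℝ) (hN : ∀ x : Fin k → ℝ, x ⬝ᵥ N.mulVec x ≤ 0)
    (Δt : ℝ) (hΔt : 0 < Δt) (u₀ u₁ : EuclideanSpace ℝ (Fin k))
    (havf : Δt⁻¹ • (u₁ - u₀) = ∫ ξ in (0:ℝ)..1,
      ((WithLp.toLp 2 <| N.mulVec ((gradient H ((1 - ξ) • u₀ + ξ • u₁) : EuclideanSpace ℝ (Fin k))) :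
        EuclideanSpace ℝ (Fin k)))) :
    H u₁ ≤ H u₀ := by
  set γ : ℝ → EuclideanSpace ℝ (Fin k) := fun ξ => (1 - ξ) • u₀ + ξ • u₁ with hγ
  have hγd : ∀ ξ : ℝ, HasDerivAt γ (u₁ - u₀) ξ := by
    intro ξ
    have h1 : HasDerivAt (fun ξ : ℝ => (1 - ξ) • u₀) (-u₀) ξ := by
      simpa using ((hasDerivAt_id ξ).const_sub 1).smul_const u₀
    have h2 : HasDerivAt (fun ξ : ℝ => ξ • u₁) u₁ ξ := by
      simpa using (hasDerivAt_id ξ).smul_const u₁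
    have h3 := h1.add h2
    rw [neg_add_eq_sub] at h3
    exact h3
  have hγc : Continuous γ := by fun_prop
  set G : ℝ → EuclideanSpace ℝ (Fin k) := fun ξ => gradient H (γ ξ) with hG
  have hGc : Continuous G := by
    have : Continuous (fderiv ℝ H) := hH.continuous_fderiv one_ne_zero
    exact ((InnerProductSpace.toDual ℝ _).symm.continuous.comp this).comp hγc
  have hGint : IntervalIntegrable G MeasureTheory.volume 0 1 := hGc.intervalIntegrable 0 1
  set g : EuclideanSpace ℝ (Fin k) := ∫ ξ in (0:ℝ)..1, G ξ with hg
  -- Step B: FTC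
  have hderiv : ∀ ξ ∈ Set.uIcc (0:ℝ) 1, HasDerivAt (fun t => H (γ t))
      (⟪G ξ, u₁ - u₀⟫) ξ := by
    intro ξ _
    have hd := ((hH.differentiable one_ne_zero) (γ ξ)).hasFDerivAt.comp_hasDerivAt ξ (hγd ξ)
    have : ⟪G ξ, u₁ - u₀⟫ = fderiv ℝ H (γ ξ) (u₁ - u₀) := by
      simp [hG, gradient, InnerProductSpace.toDual_symm_apply]
    rw [this]
    exact hd
  have hintc : Continuous fun ξ => ⟪G ξ, u₁ - u₀⟫ := hGc.inner continuous_const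
  have hB : H u₁ - H u₀ = ∫ ξ in (0:ℝ)..1, ⟪G ξ, u₁ - u₀⟫ := by
    rw [intervalIntegral.integral_eq_sub_of_hasDerivAt hderiv (hintc.intervalIntegrable 0 1)]
    simp [hγ]
  -- Step C: pull inner out of integral
  have hC : (∫ ξ in (0:ℝ)..1, ⟪G ξ, u₁ - u₀⟫) = ⟪g, u₁ - u₀⟫ := by
    have h := (innerSL ℝ (u₁ - u₀)).intervalIntegral_comp_comm hGint (a := 0) (b := 1)
    simp only [innerSL_apply_apply] at h
    calc (∫ ξ in (0:ℝ)..1, ⟪G ξ, u₁ - u₀⟫) = ∫ ξ in (0:ℝ)..1, ⟪u₁ - u₀, G ξ⟫ :=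
          intervalIntegral.integral_congr fun ξ _ => real_inner_comm _ _
      _ = ⟪u₁ - u₀, g⟫ := h
      _ = ⟪g, u₁ - u₀⟫ := real_inner_comm _ _
  -- Step D: move to the Pi (sup-norm) world, where the statement's integral lives
  set e : EuclideanSpace ℝ (Fin k) ≃L[ℝ] (Fin k → ℝ) :=
    PiLp.continuousLinearEquiv 2 ℝ (fun _ : Fin k => ℝ) with he
  set L' : (Fin k → ℝ) →L[ℝ] (Fin k → ℝ) :=
    LinearMap.toContinuousLinearMap N.mulVecLin with hL'
  have h1 := (e.toContinuousLinearMap).intervalIntegral_comp_comm hGint (a := 0) (b := 1)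
  have hGint' : IntervalIntegrable (fun ξ => e.toContinuousLinearMap (G ξ))
      MeasureTheory.volume 0 1 := ((e.toContinuousLinearMap.continuous.comp hGc)).intervalIntegrable 0 1
  have h2 := L'.intervalIntegral_comp_comm hGint' (a := 0) (b := 1)
  rw [h1] at h2
  have hD : (∫ ξ in (0:ℝ)..1, ((WithLp.toLp 2 (N.mulVec (G ξ)) : EuclideanSpace ℝ (Fin k))))
      = (WithLp.toLp 2 (N.mulVec (g : Fin k → ℝ)) : EuclideanSpace ℝ (Fin k)) := by
    have h3 := ((e.symm.toContinuousLinearMap.comp L').comp e.toContinuousLinearMap).intervalIntegral_comp_comm hGint (a := 0) (b := 1)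
    rw [hg]
    exact h3
  have havf' : u₁ - u₀ = Δt • (WithLp.toLp 2 (N.mulVec (g : Fin k → ℝ)) : EuclideanSpace ℝ (Fin k)) := by
    rw [hD] at havf
    rw [← havf, smul_smul, mul_inv_cancel₀ (ne_of_gt hΔt), one_smul]
  have key : H u₁ - H u₀ ≤ 0 := by
    rw [hB, hC, havf', real_inner_smul_right]
    have hgl : ⟪g, (WithLp.toLp 2 (N.mulVec (g : Fin k → ℝ)) : EuclideanSpace ℝ (Fin k))⟫
        = (g : Fin k → ℝ) ⬝ᵥ N.mulVec (g : Fin k → ℝ) := by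
      simp [PiLp.inner_apply, dotProduct, RCLike.inner_apply, mul_comm]
    rw [hgl]
    exact mul_nonpos_of_nonneg_of_nonpos hΔt.le (hN g)
  linarith
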